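/- Let N ≥ 2 be an integer and A, Δ > 0 with A ≤ (N−1)Δ. Suppose x ∈ ℝ^N is nondecreasing, feasible (0 ≤ x_n ≤ A for all n, and x_{n+1} − x_n ≤ Δ for all n), and maximizes var over all nondecreasing feasible trajectories, i.e. var(x) ≥ var(x') for every nondecreasing feasible x' ∈ ℝ^N. Then x_1 = 0 and x_N = A. -/

import Mathlib

/-- Mean of the first `N` entries of a real sequence. -/
noncomputable def vmean (N : ℕ) (x : ℕ → ℝ) : ℝ :=
  (∑ n ∈ Finset.range N, x n) / (N : ℝ)

/-- Variance of the first `N` entries of a real sequence. -/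
noncomputable def vvar (N : ℕ) (x : ℕ → ℝ) : ℝ :=
  (∑ n ∈ Finset.range N, (x n) ^ 2) / (N : ℝ) - (vmean N x) ^ 2

lemma mono_of_step {N : ℕ} {x : ℕ → ℝ} (h : ∀ n, n + 1 < N → x n ≤ x (n + 1)) :
    ∀ i j, i ≤ j → j < N → x i ≤ x j := by
  intro i j hij hj
  induction j with
  | zero =>
    have : i = 0 := Nat.le_zero.mp hij
    subst this; exact le_rfl
  | succ j ih =>
    rcases Nat.eq_or_lt_of_le hij with rfl | hlt
    · exact le_rfl
    · exact (ih (Nat.lt_succ_iff.mp hlt) (Nat.lt_of_succ_lt hj)).trans (h j hj)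

lemma vvar_shift (N : ℕ) (hN : 0 < N) (x : ℕ → ℝ) (c : ℝ) :
    vvar N (fun n => x n + c) = vvar N x := by
  have hNr : (N : ℝ) ≠ 0 := Nat.cast_ne_zero.mpr hN.ne'
  simp only [vvar, vmean]
  have h1 : ∑ n ∈ Finset.range N, (x n + c) = (∑ n ∈ Finset.range N, x n) + N * c := by
    rw [Finset.sum_add_distrib, Finset.sum_const, Finset.card_range]
    simp [nsmul_eq_mul]
  have h2 : ∑ n ∈ Finset.range N, (x n + c) ^ 2
      = (∑ n ∈ Finset.range N, (x n) ^ 2) + 2 * c * (∑ n ∈ Finset.range N, x n)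
        + N * c ^ 2 := by
    have : ∀ n, (x n + c) ^ 2 = (x n) ^ 2 + 2 * c * x n + c ^ 2 := by intro n; ring
    simp only [this, Finset.sum_add_distrib, Finset.sum_const, Finset.card_range,
      Finset.mul_sum, nsmul_eq_mul]
  rw [h1, h2]
  field_simp
  ring

set_option maxHeartbeats 1000000 in
theorem optimal_trajectory_endpoints (N : ℕ) (hN : 2 ≤ N) (A Δ : ℝ)
    (hA : 0 < A) (hΔ : 0 < Δ) (hAΔ : A ≤ ((N : ℝ) - 1) * Δ) (x : ℕ → ℝ)
    (hmono : ∀ n, n + 1 < N → x n ≤ x (n + 1))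
    (hbound : ∀ n < N, 0 ≤ x n ∧ x n ≤ A)
    (hstep : ∀ n, n + 1 < N → x (n + 1) - x n ≤ Δ)
    (hopt : ∀ y : ℕ → ℝ, (∀ n, n + 1 < N → y n ≤ y (n + 1)) →
      (∀ n < N, 0 ≤ y n ∧ y n ≤ A) → (∀ n, n + 1 < N → y (n + 1) - y n ≤ Δ) →
      vvar N y ≤ vvar N x) :
    x 0 = 0 ∧ x (N - 1) = A := by
  by_contra hcon
  push_neg at hcon
  have h0 := hbound 0 (by omega)
  have hlast := hbound (N - 1) (by omega)
  have hxmono := mono_of_step hmono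
  have hrange : x (N - 1) - x 0 < A := by
    by_cases h00 : x 0 = 0
    · have hne := hcon h00
      have : x (N - 1) < A := lt_of_le_of_ne hlast.2 hne
      linarith [h0.1]
    · have : 0 < x 0 := lt_of_le_of_ne h0.1 (Ne.symm h00)
      linarith [hlast.2]
  set y : ℕ → ℝ := fun n => x n - x 0 with hy
  have hymono : ∀ i j, i ≤ j → j < N → y i ≤ y j := by
    intro i j hij hj
    simp only [hy]
    linarith [hxmono i j hij hj]
  have hy0 : ∀ n < N, 0 ≤ y n := by
    intro n hn
    have := hymono 0 n (Nat.zero_le n) hn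
    simpa [hy] using this
  have hytop : ∀ n < N, y n ≤ y (N - 1) := fun n hn => hymono n (N - 1) (by omega) (by omega)
  have hyA : y (N - 1) < A := by simp only [hy]; linarith
  -- find a slack step
  have hex : ∃ k, k < N - 1 ∧ x (k + 1) - x k < Δ := by
    by_contra hk
    push_neg at hk
    have hsum : ∑ n ∈ Finset.range (N - 1), (x (n + 1) - x n) = x (N - 1) - x 0 :=
      Finset.sum_range_sub x (N - 1)
    have hge : ((N - 1 : ℕ) : ℝ) * Δ ≤ ∑ n ∈ Finset.range (N - 1), (x (n + 1) - x n) := by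
      have := Finset.card_nsmul_le_sum (Finset.range (N - 1))
        (fun n => x (n + 1) - x n) Δ (fun n hn => hk n (Finset.mem_range.mp hn))
      simpa [Finset.card_range, nsmul_eq_mul] using this
    have hcast : ((N - 1 : ℕ) : ℝ) = (N : ℝ) - 1 := by
      have : (1 : ℕ) ≤ N := by omega
      push_cast [Nat.cast_sub this]
      ring
    rw [hsum, hcast] at hge
    linarith
  obtain ⟨k, hkN, hkstep⟩ := hex
  set δ : ℝ := min (Δ - (x (k + 1) - x k)) (A - y (N - 1)) with hδ
  have hδpos : 0 < δ := lt_min (by linarith) (by linarith)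
  have hδ1 : δ ≤ Δ - (x (k + 1) - x k) := min_le_left _ _
  have hδ2 : δ ≤ A - y (N - 1) := min_le_right _ _
  set z : ℕ → ℝ := fun n => if n ≤ k then y n else y n + δ with hz
  -- feasibility of z
  have hzmono : ∀ n, n + 1 < N → z n ≤ z (n + 1) := by
    intro n hn
    simp only [hz]
    by_cases h1 : n + 1 ≤ k
    · rw [if_pos (by omega), if_pos h1]
      exact hymono n (n + 1) (by omega) hn
    · by_cases h2 : n ≤ k
      · rw [if_pos h2, if_neg h1]
        have := hymono n (n + 1) (by omega) hn
        linarith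
      · rw [if_neg h2, if_neg h1]
        have := hymono n (n + 1) (by omega) hn
        linarith
  have hzbound : ∀ n < N, 0 ≤ z n ∧ z n ≤ A := by
    intro n hn
    have h1 := hy0 n hn
    have h2 := hytop n hn
    constructor
    · simp only [hz]; split <;> linarith
    · simp only [hz]; split <;> linarith
  have hzstep : ∀ n, n + 1 < N → z (n + 1) - z n ≤ Δ := by
    intro n hn
    have hxs := hstep n hn
    have hys : y (n + 1) - y n = x (n + 1) - x n := by simp [hy]
    simp only [hz]
    by_cases h1 : n + 1 ≤ k
    · rw [if_pos h1, if_pos (show n ≤ k by omega)]; linarith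
    · by_cases h2 : n ≤ k
      · have hnk : n = k := by omega
        rw [if_neg h1, if_pos h2]
        subst hnk
        simp only [hy]
        linarith
      · rw [if_neg h1, if_neg h2]; linarith
  have hle := hopt z hzmono hzbound hzstep
  -- vvar x = vvar y
  have hxy : vvar N y = vvar N x := by
    have h := vvar_shift N (by omega) y (x 0)
    have : (fun n => y n + x 0) = x := by funext n; simp [hy]
    rw [this] at h
    exact h.symm
  -- sums
  set P : ℝ := ∑ n ∈ Finset.range (k + 1), y n with hP
  set S : ℝ := ∑ n ∈ Finset.Ico (k + 1) N, y n with hS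
  set Q : ℝ := ∑ n ∈ Finset.range N, (y n) ^ 2 with hQ
  set T : ℝ := ∑ n ∈ Finset.range N, y n with hT
  have hkN' : k + 1 ≤ N := by omega
  have hm : (Finset.Ico (k + 1) N).card = N - (k + 1) := Nat.card_Ico _ _
  set mR : ℝ := ((N - (k + 1) : ℕ) : ℝ) with hmR
  have hmR1 : (1 : ℝ) ≤ mR := by
    rw [hmR]
    exact_mod_cast Nat.one_le_iff_ne_zero.mpr (by omega)
  have hmRN : mR = (N : ℝ) - (k + 1 : ℕ) := by
    rw [hmR]
    push_cast [Nat.cast_sub hkN']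
    ring
  have hsplit : ∀ f : ℕ → ℝ, ∑ n ∈ Finset.range N, f n
      = (∑ n ∈ Finset.range (k + 1), f n) + ∑ n ∈ Finset.Ico (k + 1) N, f n := by
    intro f
    rw [Finset.range_eq_Ico, ← Finset.sum_Ico_consecutive f (Nat.zero_le (k + 1)) hkN',
      ← Finset.range_eq_Ico]
  have hTPS : T = P + S := hsplit y
  have hTz : ∑ n ∈ Finset.range N, z n = T + mR * δ := by
    rw [hsplit z]
    have e1 : ∑ n ∈ Finset.range (k + 1), z n = P := by
      apply Finset.sum_congr rfl
      intro n hn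
      simp only [hz]
      rw [if_pos (by simpa [Nat.lt_succ_iff] using Finset.mem_range.mp hn)]
    have e2 : ∑ n ∈ Finset.Ico (k + 1) N, z n = S + mR * δ := by
      have : ∀ n ∈ Finset.Ico (k + 1) N, z n = y n + δ := by
        intro n hn
        have := (Finset.mem_Ico.mp hn).1
        simp only [hz]
        rw [if_neg (by omega)]
      rw [Finset.sum_congr rfl this, Finset.sum_add_distrib, Finset.sum_const, hm,
        nsmul_eq_mul, hmR]
    rw [e1, e2, hTPS]; ring
  have hQz : ∑ n ∈ Finset.range N, (z n) ^ 2 = Q + 2 * δ * S + mR * δ ^ 2 := by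
    rw [hsplit (fun n => (z n) ^ 2)]
    have e1 : ∑ n ∈ Finset.range (k + 1), (z n) ^ 2 = ∑ n ∈ Finset.range (k + 1), (y n) ^ 2 := by
      apply Finset.sum_congr rfl
      intro n hn
      simp only [hz]
      rw [if_pos (by simpa [Nat.lt_succ_iff] using Finset.mem_range.mp hn)]
    have e2 : ∑ n ∈ Finset.Ico (k + 1) N, (z n) ^ 2
        = (∑ n ∈ Finset.Ico (k + 1) N, (y n) ^ 2) + 2 * δ * S + mR * δ ^ 2 := by
      have h1 : ∀ n ∈ Finset.Ico (k + 1) N, (z n) ^ 2 = (y n) ^ 2 + 2 * δ * y n + δ ^ 2 := by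
        intro n hn
        have := (Finset.mem_Ico.mp hn).1
        simp only [hz]
        rw [if_neg (by omega)]
        ring
      rw [Finset.sum_congr rfl h1]
      simp only [Finset.sum_add_distrib, Finset.sum_const, hm, nsmul_eq_mul, ← hmR,
        ← Finset.mul_sum, ← hS]
    rw [e1, e2, hQ, hsplit (fun n => (y n) ^ 2)]
    ring
  -- key inequality: N*S ≥ mR*T
  have hSge : mR * y k ≤ S := by
    have := Finset.card_nsmul_le_sum (Finset.Ico (k + 1) N) y (y k)
      (fun n hn => by
        have h' := Finset.mem_Ico.mp hn
        exact hymono k n (by omega) h'.2)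
    simpa [hm, nsmul_eq_mul, hmR] using this
  have hPle : P ≤ ((k : ℝ) + 1) * y k := by
    have := Finset.sum_le_card_nsmul (Finset.range (k + 1)) y (y k)
      (fun n hn => hymono n k (by simpa [Nat.lt_succ_iff] using Finset.mem_range.mp hn) (by omega))
    simpa [Finset.card_range, nsmul_eq_mul] using this
  have hkey : 0 ≤ (N : ℝ) * S - mR * T := by
    have hNmR : (N : ℝ) = mR + ((k : ℝ) + 1) := by rw [hmRN]; push_cast; ring
    have hmR0 : (0 : ℝ) ≤ mR := by linarith
    have hk0 : (0 : ℝ) ≤ (k : ℝ) + 1 := by positivity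
    have h1 : mR * P ≤ mR * (((k : ℝ) + 1) * y k) := by
      exact mul_le_mul_of_nonneg_left hPle hmR0
    have h2 : ((k : ℝ) + 1) * (mR * y k) ≤ ((k : ℝ) + 1) * S :=
      mul_le_mul_of_nonneg_left hSge hk0
    rw [hTPS, hNmR]
    nlinarith
  -- variance increase
  have hNpos : (0 : ℝ) < (N : ℝ) := by positivity
  have hNne : (N : ℝ) ≠ 0 := hNpos.ne'
  have hNmRpos : (0 : ℝ) < (N : ℝ) - mR := by
    rw [hmRN]; push_cast; linarith [Nat.cast_nonneg (α := ℝ) k]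
  have hvz : vvar N z = (Q + 2 * δ * S + mR * δ ^ 2) / (N : ℝ)
      - ((T + mR * δ) / (N : ℝ)) ^ 2 := by
    simp only [vvar, vmean, hTz, hQz]
  have hvy : vvar N y = Q / (N : ℝ) - (T / (N : ℝ)) ^ 2 := by
    simp only [vvar, vmean]
    rfl
  clear_value P S Q T δ y z
  have hdiff : vvar N z - vvar N y
      = (2 * δ * ((N : ℝ) * S - mR * T) + δ ^ 2 * mR * ((N : ℝ) - mR)) / (N : ℝ) ^ 2 := by
    rw [hvz, hvy]
    field_simp
    ring
  have hpos : 0 < vvar N z - vvar N y := by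
    rw [hdiff]
    apply div_pos
    · have : 0 < δ ^ 2 * mR * ((N : ℝ) - mR) := by positivity
      nlinarith
    · positivity
  rw [hxy] at hpos
  linarith
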